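/- Fix ε > 0. For [x, x̄, v, v̄] with v ≠ v̄, |x - x̄| > ε, and D(X,V) := -(x̄ - x)·ŵ - √(|(x̄ - x)·ŵ|² + ε² - |x̄ - x|²) well-defined (discriminant nonnegative), define τ(X, V) := D(X,V)/|v̄ - v| where w = v̄ - v. Then the directional derivative of τ in the X = [x, x̄] variable along V = [v, v̄] equals -1, i.e. (V·∇_X) τ(X, V) = -1. -/

import Mathlib

open scoped RealInnerProductSpace

noncomputable abbrev E3 := EuclideanSpace ℝ (Fin 3)

/-- Transport identity (ID-I): the directional derivative of the collision time map
`τ` in the position variable `X = (x, x̄)` along the velocity `V = (v, v̄)` equals `-1`. -/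
theorem stmt3 (ε : ℝ) (hε : 0 < ε) (x xb v vb : E3) (hv : v ≠ vb)
    (hx : ε < ‖x - xb‖)
    (hdisc : 0 < ⟪xb - x, ‖vb - v‖⁻¹ • (vb - v)⟫ ^ 2 + ε ^ 2 - ‖xb - x‖ ^ 2) :
    fderiv ℝ (fun p : E3 × E3 =>
      (-(⟪p.2 - p.1, ‖vb - v‖⁻¹ • (vb - v)⟫) -
        Real.sqrt (⟪p.2 - p.1, ‖vb - v‖⁻¹ • (vb - v)⟫ ^ 2 + ε ^ 2 - ‖p.2 - p.1‖ ^ 2))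
        / ‖vb - v‖) (x, xb) (v, vb) = -1 := by
  set w : E3 := vb - v with hw
  have hwne : w ≠ 0 := sub_ne_zero.mpr (Ne.symm hv)
  have hwn : (0:ℝ) < ‖w‖ := norm_pos_iff.mpr hwne
  set u : E3 := ‖w‖⁻¹ • w with hu
  have hg : HasFDerivAt (fun p : E3 × E3 => p.2 - p.1)
      ((ContinuousLinearMap.snd ℝ E3 E3) - (ContinuousLinearMap.fst ℝ E3 E3)) (x, xb) :=
    (hasFDerivAt_snd).sub (hasFDerivAt_fst)
  have hA := hg.inner ℝ (hasFDerivAt_const u (x, xb))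
  have hN := hg.inner ℝ hg
  have hNsq : HasFDerivAt (fun p : E3 × E3 => ‖p.2 - p.1‖ ^ 2)
      ((fderivInnerCLM ℝ (xb - x, xb - x)).comp
        (((ContinuousLinearMap.snd ℝ E3 E3) - (ContinuousLinearMap.fst ℝ E3 E3)).prod
         ((ContinuousLinearMap.snd ℝ E3 E3) - (ContinuousLinearMap.fst ℝ E3 E3)))) (x, xb) := by
    exact hN.congr_of_eventuallyEq (Filter.Eventually.of_forall fun p => (real_inner_self_eq_norm_sq _).symm)
  have hS := ((hA.mul hA).add_const (ε ^ 2)).sub hNsq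
  have hSval : (fun p : E3 × E3 => ⟪p.2 - p.1, u⟫ * ⟪p.2 - p.1, u⟫ + ε ^ 2 - ‖p.2 - p.1‖ ^ 2)
      (x, xb) ≠ 0 := by
    have := hdisc
    rw [pow_two] at this
    exact ne_of_gt this
  have hsq := hS.sqrt hSval
  have htot := ((hA.neg).sub hsq).mul_const ‖w‖⁻¹
  have hfe : (fun p : E3 × E3 =>
      (-(⟪p.2 - p.1, u⟫) - Real.sqrt (⟪p.2 - p.1, u⟫ ^ 2 + ε ^ 2 - ‖p.2 - p.1‖ ^ 2)) / ‖w‖)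
      = (fun p : E3 × E3 =>
      (-(⟪p.2 - p.1, u⟫) - Real.sqrt (⟪p.2 - p.1, u⟫ * ⟪p.2 - p.1, u⟫ + ε ^ 2 - ‖p.2 - p.1‖ ^ 2))
        * ‖w‖⁻¹) := by
    funext p; rw [pow_two, div_eq_mul_inv]
  rw [hfe, (show HasFDerivAt (fun p : E3 × E3 => (-(⟪p.2 - p.1, u⟫) - Real.sqrt (⟪p.2 - p.1, u⟫ * ⟪p.2 - p.1, u⟫ + ε ^ 2 - ‖p.2 - p.1‖ ^ 2)) * ‖w‖⁻¹) _ (x, xb) from htot).fderiv]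
  have hwu : ⟪w, u⟫ = ‖w‖ := by
    rw [hu, real_inner_smul_right, real_inner_self_eq_norm_sq]
    field_simp
  have hyu : ⟪xb - x, u⟫ = ‖w‖⁻¹ * ⟪xb - x, w⟫ := by
    rw [hu, real_inner_smul_right]
  simp only [ContinuousLinearMap.coe_sub', ContinuousLinearMap.coe_smul',
    ContinuousLinearMap.neg_apply, ContinuousLinearMap.sub_apply, ContinuousLinearMap.smul_apply,
    ContinuousLinearMap.comp_apply, ContinuousLinearMap.prod_apply, ContinuousLinearMap.coe_fst',
    ContinuousLinearMap.coe_snd', fderivInnerCLM_apply, Pi.sub_apply, Pi.smul_apply,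
    ContinuousLinearMap.add_apply, smul_eq_mul, ContinuousLinearMap.zero_apply,
    ContinuousLinearMap.coe_zero, Pi.zero_apply]
  rw [inner_zero_right, hwu, hyu, real_inner_comm w (xb - x)]
  have hSpos : (0:ℝ) < Real.sqrt (⟪xb - x, u⟫ ^ 2 + ε ^ 2 - ‖xb - x‖ ^ 2) :=
    Real.sqrt_pos.mpr hdisc
  field_simp
  rw [← hw]
  ring
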